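/- Let 𝔸 and 𝔹 be order k ≥ 2 tensors of dimensions n and m with 𝔸u = λ u^{[k-1]} and 𝔹v = μ v^{[k-1]}, and let w = u ⊗ v. Then (𝔸 ⊗ 𝔹)w = (λμ) w^{[k-1]}. -/

import Mathlib

open scoped BigOperators

noncomputable section

/-- An "order (1 + |α|)" tensor of dimension `|I|` over `R`: entries indexed by a
head index in `I` and a tail of indices `α → I`. -/
abbrev Tensor (R I α : Type) : Type := I → (α → I) → R

/-- The general tensor product: `(A*B)_{i α₁ ⋯ α_m} = ∑ a_{i i₂ ⋯} ∏ b_{i_j α_j}`. -/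
def tmul {R I α β : Type} [CommSemiring R] [Fintype I] [DecidableEq α] [Fintype α]
    (A : Tensor R I α) (B : Tensor R I β) : Tensor R I (α × β) :=
  fun i f => ∑ t : α → I, A i t * ∏ j : α, B (t j) (fun b => f (j, b))

/-- The general tensor product of a tensor with a vector (an order-1 tensor). -/
def tapp {R I α : Type} [CommSemiring R] [Fintype I] [DecidableEq α] [Fintype α]
    (A : Tensor R I α) (x : I → R) : I → R :=
  fun i => ∑ t : α → I, A i t * ∏ j : α, x (t j)

/-- The general tensor product `P * A` where `P` is a matrix (an order-2 tensor). -/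
def matMulT {R I α : Type} [CommSemiring R] [Fintype I]
    (P : Matrix I I R) (A : Tensor R I α) : Tensor R I α :=
  fun i f => ∑ j : I, P i j * A j f

/-- The general tensor product `A * Q` where `Q` is a matrix (an order-2 tensor). -/
def tMulMat {R I α : Type} [CommSemiring R] [Fintype I] [DecidableEq α] [Fintype α]
    (A : Tensor R I α) (Q : Matrix I I R) : Tensor R I α :=
  fun i f => ∑ t : α → I, A i t * ∏ j : α, Q (t j) (f j)

/-- The unit tensor `𝕀`: entries `1` exactly on the diagonal. -/
def unitT (R I α : Type) [CommSemiring R] [DecidableEq I] [Fintype α] [DecidableEq α] :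
    Tensor R I α :=
  fun i f => if ∀ j, f j = i then 1 else 0

/-- The direct product of two tensors of the same order. -/
def dprod {R I J α : Type} [CommSemiring R]
    (A : Tensor R I α) (B : Tensor R J α) : Tensor R (I × J) α :=
  fun p f => A p.1 (fun j => (f j).1) * B p.2 (fun j => (f j).2)

end

/-- if `𝔸u = λ u^{[k]}` and `𝔹v = μ v^{[k]}` (tensors of order
`k + 1 ≥ 2`), then `w = u ⊗ v` satisfies `(𝔸 ⊗ 𝔹) w = (λμ) w^{[k]}`. -/
theorem dprod_mul_eigen (n m k : ℕ) (hk : 1 ≤ k)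
    (A : Tensor ℂ (Fin n) (Fin k)) (B : Tensor ℂ (Fin m) (Fin k))
    (lam mu : ℂ) (u : Fin n → ℂ) (v : Fin m → ℂ)
    (hu : tapp A u = fun i => lam * u i ^ k)
    (hv : tapp B v = fun j => mu * v j ^ k) :
    tapp (dprod A B) (fun p => u p.1 * v p.2) =
      fun p => (lam * mu) * (u p.1 * v p.2) ^ k := by
  funext p
  have hA := congrFun hu p.1
  have hB := congrFun hv p.2
  simp only [tapp] at hA hB
  have key : tapp (dprod A B) (fun p => u p.1 * v p.2) p =
      (∑ f : Fin k → Fin n, A p.1 f * ∏ j, u (f j)) *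
      (∑ g : Fin k → Fin m, B p.2 g * ∏ j, v (g j)) := by
    rw [Finset.sum_mul_sum]
    simp only [tapp, dprod]
    rw [← Equiv.sum_comp (Equiv.arrowProdEquivProdArrow (Fin k) (fun _ => Fin n) (fun _ => Fin m)).symm,
      Fintype.sum_prod_type]
    refine Finset.sum_congr rfl fun f _ => Finset.sum_congr rfl fun g _ => ?_
    simp [Equiv.arrowProdEquivProdArrow, Finset.prod_mul_distrib]
    ring
  rw [key, hA, hB, mul_pow]
  ring
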